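/- Let m ≥ 1 and let X < 2^m be a natural number. Starting from γ = 0 and folding over i = 1, 2, …, m the update γ ↦ (if X.testBit t = true for all t with m - i ≤ t < m then γ XOR ((i-1) XOR i) else γ), the final value of γ equals LOC_m(X). (Correctness of the Modular LOC algorithm.) -/

import Mathlib

/-- The `m`-bit leading-one count: `m` if `X = 2^m - 1`, otherwise the least `γ`
such that `X.testBit (m - 1 - γ) = false`. -/
noncomputable def LOC (m X : ℕ) : ℕ :=
  if X = 2 ^ m - 1 then m else sInf {γ : ℕ | X.testBit (m - 1 - γ) = false}

lemma foldl_threshold (k : ℕ) : ∀ m : ℕ,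
    (((List.range m).map (· + 1)).foldl
      (fun γ i => if i ≤ k then γ ^^^ ((i - 1) ^^^ i) else γ) 0) = min k m := by
  intro m
  induction m with
  | zero => simp
  | succ n ih =>
    rw [List.range_succ, List.map_append, List.foldl_append, ih]
    simp only [List.map_cons, List.map_nil, List.foldl_cons, List.foldl_nil]
    by_cases h : n + 1 ≤ k
    · have hmin : min k n = n := by omega
      rw [if_pos h, hmin]
      have : n + 1 - 1 = n := rfl
      rw [this, ← Nat.xor_assoc, Nat.xor_self, Nat.zero_xor]
      omega
    · rw [if_neg h]; omega

theorem stmt_6 (m X : ℕ) (hm : 1 ≤ m) (hX : X < 2 ^ m) :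
    (((List.range m).map (· + 1)).foldl
      (fun γ i =>
        if ∀ t, t < m → m - i ≤ t → X.testBit t = true then
          γ ^^^ ((i - 1) ^^^ i)
        else γ) 0) = LOC m X := by
  set k := LOC m X with hk
  have hkm : k ≤ m ∧ ∀ i, i ≤ m → ((∀ t, t < m → m - i ≤ t → X.testBit t = true) ↔ i ≤ k) := by
    by_cases hfull : X = 2 ^ m - 1
    · constructor
      · simp [hk, LOC, hfull]
      · intro i hi
        constructor
        · intro _; simp [hk, LOC, hfull]; omega
        · intro _ t ht _
          subst hfull
          simp [Nat.testBit_two_pow_sub_one, ht]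
    · have hkdef : k = sInf {γ : ℕ | X.testBit (m - 1 - γ) = false} := by
        simp [hk, LOC, hfull]
      have hne : {γ : ℕ | X.testBit (m - 1 - γ) = false}.Nonempty := by
        by_contra hempty
        apply hfull
        apply Nat.eq_of_testBit_eq
        intro t
        rw [Nat.testBit_two_pow_sub_one]
        by_cases ht : t < m
        · simp only [ht, decide_eq_true_eq]
          by_contra hbit
          exact hempty ⟨m - 1 - t, by
            have : m - 1 - (m - 1 - t) = t := by omega
            rw [Set.mem_setOf_eq, this]
            simpa using hbit⟩
        · simp only [ht, decide_eq_false_iff_not]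
          exact Nat.testBit_eq_false_of_lt (lt_of_lt_of_le hX (Nat.pow_le_pow_right (by norm_num) (by omega)))
      have hmem : X.testBit (m - 1 - k) = false := by
        have := Nat.sInf_mem hne
        rwa [hkdef]
      have hlt : ∀ γ, γ < k → X.testBit (m - 1 - γ) = true := by
        intro γ hγ
        have : γ ∉ {γ : ℕ | X.testBit (m - 1 - γ) = false} := by
          rw [hkdef] at hγ
          exact Nat.notMem_of_lt_sInf hγ
        simpa [Set.mem_setOf_eq] using this
      have hkle : k ≤ m := by
        rcases hne with ⟨γ₀, hγ₀⟩
        have hmem' : min γ₀ (m - 1) ∈ {γ : ℕ | X.testBit (m - 1 - γ) = false} := by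
          have : m - 1 - min γ₀ (m - 1) = m - 1 - γ₀ := by omega
          rw [Set.mem_setOf_eq, this]
          exact hγ₀
        have h1 : k ≤ min γ₀ (m - 1) := by
          rw [hkdef]; exact Nat.sInf_le hmem'
        omega
      refine ⟨hkle, fun i hi => ⟨?_, ?_⟩⟩
      · intro hcond
        by_contra hik
        push_neg at hik
        have hbit := hcond (m - 1 - k) (by omega) (by omega)
        rw [hmem] at hbit
        exact Bool.false_ne_true hbit
      · intro hik t ht hmt
        have hγ : m - 1 - t < i := by omega
        have := hlt (m - 1 - t) (lt_of_lt_of_le hγ hik)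
        rwa [show m - 1 - (m - 1 - t) = t by omega] at this
  obtain ⟨hkle, hiff⟩ := hkm
  have hmin : k ⊓ m = k := by omega
  have := foldl_threshold k m
  rw [← hmin, ← this]
  apply List.foldl_ext
  intro γ i hi
  simp only [List.mem_map, List.mem_range] at hi
  obtain ⟨j, hj, rfl⟩ := hi
  by_cases hc : ∀ t, t < m → m - (j + 1) ≤ t → X.testBit t = true
  · rw [if_pos hc, if_pos (((hiff (j + 1) (by omega)).mp hc))]
  · rw [if_neg hc, if_neg (fun h => hc ((hiff (j + 1) (by omega)).mpr h))]
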